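/- Let H₁ and H₂ be complex Hilbert spaces and let D : H₁ → H₂ be a bounded linear operator. Let P be the orthogonal projection of H₁ onto ker D and Q the orthogonal projection of H₂ onto ker D* (where D* is the Hilbert-space adjoint of D). Suppose that the operator A := P + D*D is invertible in the bounded operators on H₁, and let S be a positive bounded self-adjoint operator on H₁ with S² = A⁻¹. Then (D∘S)* ∘ (D∘S) = 1 − P and (D∘S) ∘ (D∘S)* = 1 − Q. Consequently, the block operator 𝒟 on H₁ ⊕ H₂ with zero diagonal blocks, upper-right block (D∘S)* and lower-left block D∘S, is self-adjoint and satisfies 𝒟² = 1 − (P ⊕ Q). -/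

import Mathlib

open ContinuousLinearMap

variable {H₁ H₂ : Type*}
  [NormedAddCommGroup H₁] [InnerProductSpace ℂ H₁] [CompleteSpace H₁]
  [NormedAddCommGroup H₂] [InnerProductSpace ℂ H₂] [CompleteSpace H₂]

/-- The block operator on the Hilbert space `H₁ ⊕₂ H₂` with zero diagonal blocks, upper-right
block `(adjoint T)` and lower-left block `T`, i.e. `(x, y) ↦ ((adjoint T) y, T x)`. -/
noncomputable def blockOffDiagonal (T : H₁ →L[ℂ] H₂) :
    WithLp 2 (H₁ × H₂) →L[ℂ] WithLp 2 (H₁ × H₂) :=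
  ((WithLp.prodContinuousLinearEquiv 2 ℂ H₁ H₂).symm.toContinuousLinearMap) ∘L
    (((ContinuousLinearMap.adjoint T) ∘L ContinuousLinearMap.snd ℂ H₁ H₂).prod
      (T ∘L ContinuousLinearMap.fst ℂ H₁ H₂)) ∘L
    (WithLp.prodContinuousLinearEquiv 2 ℂ H₁ H₂).toContinuousLinearMap

/-- The block-diagonal operator `P ⊕ Q` on the Hilbert space `H₁ ⊕₂ H₂`. -/
noncomputable def blockDiagonal (P : H₁ →L[ℂ] H₁) (Q : H₂ →L[ℂ] H₂) :
    WithLp 2 (H₁ × H₂) →L[ℂ] WithLp 2 (H₁ × H₂) :=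
  ((WithLp.prodContinuousLinearEquiv 2 ℂ H₁ H₂).symm.toContinuousLinearMap) ∘L
    (P.prodMap Q) ∘L
    (WithLp.prodContinuousLinearEquiv 2 ℂ H₁ H₂).toContinuousLinearMap

set_option maxHeartbeats 1000000

/-- Let `D : H₁ → H₂` be bounded, `P` the orthogonal projection onto
`ker D`, `Q` the orthogonal projection onto `ker D*`, `A := P + D*D` invertible, and `S` a
positive bounded self-adjoint operator with `S² = A⁻¹`.  Then `(DS)*(DS) = 1 − P` and
`(DS)(DS)* = 1 − Q`, and consequently the block operator `𝒟` with zero diagonal blocks,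
upper-right block `(DS)*` and lower-left block `DS` is self-adjoint and satisfies
`𝒟² = 1 − (P ⊕ Q)`. -/
theorem normalized_operator_blocks
    (D : H₁ →L[ℂ] H₂) (P : H₁ →L[ℂ] H₁) (Q : H₂ →L[ℂ] H₂) (S : H₁ →L[ℂ] H₁)
    (hP₁ : ∀ x : H₁, P x ∈ LinearMap.ker (D : H₁ →ₗ[ℂ] H₂))
    (hP₂ : ∀ x ∈ LinearMap.ker (D : H₁ →ₗ[ℂ] H₂), P x = x)
    (hPsa : IsSelfAdjoint P)
    (hQ₁ : ∀ y : H₂, Q y ∈ LinearMap.ker (ContinuousLinearMap.adjoint D : H₂ →ₗ[ℂ] H₁))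
    (hQ₂ : ∀ y ∈ LinearMap.ker (ContinuousLinearMap.adjoint D : H₂ →ₗ[ℂ] H₁), Q y = y)
    (hQsa : IsSelfAdjoint Q)
    (hA : IsUnit (P + (ContinuousLinearMap.adjoint D) ∘L D))
    (hSpos : S.IsPositive)
    (hS : (S ∘L S) ∘L (P + (ContinuousLinearMap.adjoint D) ∘L D) = 1 ∧
          (P + (ContinuousLinearMap.adjoint D) ∘L D) ∘L (S ∘L S) = 1) :
    (ContinuousLinearMap.adjoint (D ∘L S)) ∘L (D ∘L S) = 1 - P ∧
    (D ∘L S) ∘L (ContinuousLinearMap.adjoint (D ∘L S)) = 1 - Q ∧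
    IsSelfAdjoint (blockOffDiagonal (D ∘L S)) ∧
    (blockOffDiagonal (D ∘L S)) ∘L (blockOffDiagonal (D ∘L S)) = 1 - blockDiagonal P Q := by
  obtain ⟨hS1, hS2⟩ := hS
  have hSsa : IsSelfAdjoint S := hSpos.isSelfAdjoint
  set A : H₁ →L[ℂ] H₁ := P + (ContinuousLinearMap.adjoint D) ∘L D with hAdef
  have hS1' : (S * S) * A = 1 := hS1
  have hS2' : A * (S * S) = 1 := hS2
  have hDP : D ∘L P = 0 := by ext x; simpa using hP₁ x
  have hPDa : P ∘L ContinuousLinearMap.adjoint D = 0 := by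
    have h := congrArg ContinuousLinearMap.adjoint hDP
    rwa [adjoint_comp, hPsa.adjoint_eq, map_zero] at h
  have hDaQ : ContinuousLinearMap.adjoint D ∘L Q = 0 := by ext y; simpa using hQ₁ y
  have hQD : Q ∘L D = 0 := by
    have h := congrArg ContinuousLinearMap.adjoint hDaQ
    rwa [adjoint_comp, hQsa.adjoint_eq, adjoint_adjoint, map_zero] at h
  have hPP : P ∘L P = P := by
    ext x; simp only [comp_apply]; exact hP₂ _ (hP₁ x)
  have hAP : A * P = P := by
    show A ∘L P = P
    rw [hAdef, add_comp, hPP, comp_assoc, hDP, comp_zero, add_zero]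
  have hS2P : (S * S) * P = P := by
    calc (S * S) * P = (S * S) * (A * P) := by rw [hAP]
      _ = ((S * S) * A) * P := by simp only [mul_assoc]
      _ = P := by rw [hS1', one_mul]
  have hSP : S * P = P := by
    have key : ∀ x : H₁, S (P x) = P x := by
      intro x
      have hx : S (S (P x)) = P x := by
        have h := DFunLike.congr_fun hS2P x
        simpa [mul_apply] using h
      set z := S (P x) - P x with hz
      have hSz : S z = -z := by
        rw [hz, map_sub, hx]
        abel
      have h0 : RCLike.re (inner (𝕜 := ℂ) (S z) z) = -(‖z‖ ^ 2) := by
        rw [hSz, inner_neg_left, map_neg, inner_self_eq_norm_sq]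
      have hge := hSpos.re_inner_nonneg_left z
      have hz0 : z = 0 := by
        rw [h0] at hge
        have : ‖z‖ ^ 2 ≤ 0 := by linarith
        have : ‖z‖ = 0 := by nlinarith [norm_nonneg z]
        exact norm_eq_zero.mp this
      have := sub_eq_zero.mp (hz ▸ hz0)
      exact this
    ext x
    simpa [mul_apply] using key x
  have hSPc : S ∘L P = P := hSP
  have hPS : P ∘L S = P := by
    have h := congrArg ContinuousLinearMap.adjoint hSPc
    rwa [adjoint_comp, hPsa.adjoint_eq, hSsa.adjoint_eq] at h
  have hPS' : P * S = P := hPS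
  have hAS : A * S = S * A := by
    calc A * S = (A * S) * ((S * S) * A) := by rw [hS1', mul_one]
      _ = (A * (S * S)) * (S * A) := by simp only [mul_assoc]
      _ = S * A := by rw [hS2', one_mul]
  have hSAS : S * (A * S) = 1 := by
    rw [hAS, ← mul_assoc]
    exact hS1'
  have hadj : ContinuousLinearMap.adjoint (D ∘L S) = S ∘L ContinuousLinearMap.adjoint D := by
    rw [adjoint_comp, hSsa.adjoint_eq]
  have hK : ContinuousLinearMap.adjoint D ∘L D = A - P := by
    rw [hAdef, add_sub_cancel_left]
  have hPS2 : P ∘L (S ∘L S) = P := by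
    show P * (S * S) = P
    rw [← mul_assoc, hPS', hPS']
  -- First identity
  have g1 : (ContinuousLinearMap.adjoint (D ∘L S)) ∘L (D ∘L S) = 1 - P := by
    rw [hadj]
    have e1 : (S ∘L ContinuousLinearMap.adjoint D) ∘L (D ∘L S)
        = S ∘L ((ContinuousLinearMap.adjoint D ∘L D) ∘L S) := by
      simp only [comp_assoc]
    rw [e1, hK]
    show S * ((A - P) * S) = 1 - P
    rw [sub_mul, mul_sub, hPS', hSP, hSAS]
  -- Second identity
  have g2 : (D ∘L S) ∘L (ContinuousLinearMap.adjoint (D ∘L S)) = 1 - Q := by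
    rw [hadj]
    set T : H₂ →L[ℂ] H₂ := (D ∘L (S ∘L S)) ∘L ContinuousLinearMap.adjoint D with hT
    have eT : (D ∘L S) ∘L (S ∘L ContinuousLinearMap.adjoint D) = T := by
      rw [hT]; simp only [comp_assoc]
    rw [eT]
    have hQT : Q ∘L T = 0 := by
      rw [hT]
      calc Q ∘L ((D ∘L (S ∘L S)) ∘L ContinuousLinearMap.adjoint D)
          = ((Q ∘L D) ∘L (S ∘L S)) ∘L ContinuousLinearMap.adjoint D := by
            simp only [comp_assoc]
        _ = 0 := by rw [hQD, zero_comp, zero_comp]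
    have hDaT : ContinuousLinearMap.adjoint D ∘L T = ContinuousLinearMap.adjoint D := by
      rw [hT]
      calc ContinuousLinearMap.adjoint D ∘L ((D ∘L (S ∘L S)) ∘L ContinuousLinearMap.adjoint D)
          = ((ContinuousLinearMap.adjoint D ∘L D) ∘L (S ∘L S)) ∘L ContinuousLinearMap.adjoint D := by
            simp only [comp_assoc]
        _ = ((A - P) ∘L (S ∘L S)) ∘L ContinuousLinearMap.adjoint D := by rw [hK]
        _ = (A ∘L (S ∘L S)) ∘L ContinuousLinearMap.adjoint D
              - (P ∘L (S ∘L S)) ∘L ContinuousLinearMap.adjoint D := by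
            rw [sub_comp, sub_comp]
        _ = ContinuousLinearMap.adjoint D := by
            rw [hS2, hPS2, hPDa, one_def, id_comp, sub_zero]
    have hRfix : Q ∘L (1 - T) = 1 - T := by
      ext y
      have hy : (1 - T) y ∈ LinearMap.ker (ContinuousLinearMap.adjoint D : H₂ →ₗ[ℂ] H₁) := by
        have h := DFunLike.congr_fun hDaT y
        simp only [comp_apply] at h
        simp [LinearMap.mem_ker, map_sub, h]
      simpa using hQ₂ _ hy
    have hQR : Q ∘L (1 - T) = Q := by
      show Q * (1 - T) = Q
      have hQT' : Q * T = 0 := hQT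
      rw [mul_sub, mul_one, hQT', sub_zero]
    have hQeq : Q = 1 - T := hQR.symm.trans hRfix
    rw [hQeq, sub_sub_cancel]
  -- Self-adjointness of the block operator
  have g3 : IsSelfAdjoint (blockOffDiagonal (D ∘L S)) := by
    rw [ContinuousLinearMap.isSelfAdjoint_iff_isSymmetric]
    intro z w
    simp only [blockOffDiagonal, ContinuousLinearMap.coe_coe, coe_comp',
      ContinuousLinearEquiv.coe_coe, Function.comp_apply,
      WithLp.prodContinuousLinearEquiv_apply, WithLp.prodContinuousLinearEquiv_symm_apply,
      prod_apply, coe_fst', coe_snd', WithLp.prod_inner_apply,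
      WithLp.toLp_fst, WithLp.toLp_snd, WithLp.ofLp_fst, WithLp.ofLp_snd,
      comp_apply]
    rw [adjoint_inner_left, adjoint_inner_right]
    simp only [comp_apply]
    ring
  refine ⟨g1, g2, g3, ?_⟩
  -- The square of the block operator
  ext z
  have h1 := DFunLike.congr_fun g1 z.fst
  have h2 := DFunLike.congr_fun g2 z.snd
  simp only [comp_apply, sub_apply, one_apply, adjoint_comp, hSsa.adjoint_eq] at h1 h2
  refine WithLp.ofLp_injective 2 (Prod.ext ?_ ?_)
  · simpa [blockOffDiagonal, blockDiagonal, hSsa.adjoint_eq] using h1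
  · simpa [blockOffDiagonal, blockDiagonal, hSsa.adjoint_eq] using h2
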